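/- Let C be a triangulated category, R a rigid functorially finite subcategory, G(c) = C(−, Σc)|_R. For z ∈ (Σ⁻¹R) * R and any c ∈ C, the map C(z, c) → Hom_{Mod R}(Gz, Gc) induced by G is surjective. -/

import Mathlib

open CategoryTheory

section
variable {C : Type*} [Category C] [Preadditive C] [Linear ℂ C] [HasShift C ℤ]
  (R : Set C)

/-- The full subcategory on a set `R` of objects of `C`. -/
abbrev Subcat := ObjectProperty.FullSubcategory (fun x : C => x ∈ R)

/-- The category `Mod R` of `ℂ`-linear contravariant functors `R → Mod ℂ`. -/
abbrev ModR := (Subcat R)ᵒᵖ ⥤ ModuleCat ℂ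

/-- The functor `G : C → Mod R`, `c ↦ C(−, Σc)|_R`. -/
@[simps]
noncomputable def Gfun : C ⥤ ModR R where
  obj c :=
    { obj := fun r => ModuleCat.of ℂ (r.unop.obj ⟶ c⟦(1 : ℤ)⟧)
      map := fun {r r'} f => ModuleCat.ofHom (Linear.leftComp ℂ (c⟦(1 : ℤ)⟧) f.unop.hom)
      map_id := fun r => by ext g; exact Category.id_comp g
      map_comp := fun {r r' r''} f g => by ext h; exact Category.assoc _ _ _ }
  map {c c'} f :=
    { app := fun r => ModuleCat.ofHom (Linear.rightComp ℂ _ (f⟦(1 : ℤ)⟧'))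
      naturality := fun {r r'} g => by ext h; exact Category.assoc _ _ _ }
  map_id c := by
    apply NatTrans.ext; funext r; ext h
    simp [Linear.rightComp]
  map_comp {c c' c''} f g := by
    apply NatTrans.ext; funext r; ext h
    simp only [Linear.rightComp, Functor.map_comp]
    exact (Category.assoc _ _ _).symm

end


section
variable {C : Type*} [Category C] [Preadditive C] [Linear ℂ C] [HasShift C ℤ]
  (R : Set C)

lemma Gfun_map_apply' {X Y : C} (b : X ⟶ Y) (r : (Subcat R)ᵒᵖ)
    (x : r.unop.obj ⟶ X⟦(1 : ℤ)⟧) :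
    ((Gfun R).map b).app r x = x ≫ b⟦(1 : ℤ)⟧' := rfl

lemma Gfun_map_zero (X Y : C) [(shiftFunctor C (1 : ℤ)).Additive] :
    (Gfun R).map (0 : X ⟶ Y) = 0 := by
  apply NatTrans.ext; funext r'; ext (x : r'.unop.obj ⟶ X⟦(1 : ℤ)⟧)
  show x ≫ (0 : X ⟶ Y)⟦(1 : ℤ)⟧' = _
  rw [Functor.map_zero, Limits.comp_zero]
  rfl

/-- Yoneda: the map `(r⟦-1⟧ ⟶ c) → Hom(G(r⟦-1⟧), Gc)` is surjective for `r ∈ R`. -/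
lemma G_yoneda_surj {r : C} (hr : r ∈ R) (c : C)
    (ψ : (Gfun R).obj (r⟦(-1 : ℤ)⟧) ⟶ (Gfun R).obj c) :
    ∃ b : r⟦(-1 : ℤ)⟧ ⟶ c, (Gfun R).map b = ψ := by
  set t : r ⟶ c⟦(1 : ℤ)⟧ :=
    ψ.app (Opposite.op ⟨r, hr⟩)
      ((shiftFunctorCompIsoId C (-1 : ℤ) (1 : ℤ) (by ring)).inv.app r) with ht
  obtain ⟨b, hb⟩ : ∃ b : r⟦(-1 : ℤ)⟧ ⟶ c, b⟦(1 : ℤ)⟧' =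
      (shiftFunctorCompIsoId C (-1 : ℤ) (1 : ℤ) (by ring)).hom.app r ≫ t := by
    refine ⟨t⟦(-1 : ℤ)⟧' ≫ (shiftFunctorCompIsoId C (1 : ℤ) (-1 : ℤ) (by ring)).hom.app c, ?_⟩
    rw [Functor.map_comp, shift_shiftFunctorCompIsoId_hom_app]
    have := (shiftFunctorCompIsoId C (-1 : ℤ) (1 : ℤ) (by ring)).hom.naturality t
    dsimp at this ⊢
    rw [← this]
  refine ⟨b, ?_⟩
  apply NatTrans.ext; funext r'
  ext (x : r'.unop.obj ⟶ (r⟦(-1 : ℤ)⟧)⟦(1 : ℤ)⟧)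
  rw [Gfun_map_apply', hb]
  let xbar : (⟨r'.unop.obj, r'.unop.property⟩ : Subcat R) ⟶ ⟨r, hr⟩ :=
    ObjectProperty.homMk (x ≫ (shiftFunctorCompIsoId C (-1 : ℤ) (1 : ℤ) (by ring)).hom.app r :
      r'.unop.obj ⟶ r)
  have hnat := DFunLike.congr_fun (congrArg ModuleCat.Hom.hom (ψ.naturality xbar.op))
    ((shiftFunctorCompIsoId C (-1 : ℤ) (1 : ℤ) (by ring)).inv.app r)
  erw [comp_apply, comp_apply] at hnat
  have h1 : (((Gfun R).obj (r⟦(-1 : ℤ)⟧)).map xbar.op)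
      ((shiftFunctorCompIsoId C (-1 : ℤ) (1 : ℤ) (by ring)).inv.app r) = x := by
    show (x ≫ _) ≫ _ = x
    rw [Category.assoc, Iso.hom_inv_id_app]
    exact Category.comp_id x
  have hnat2 := (DFunLike.congr_arg
    (ψ.app (Opposite.op (⟨r'.unop.obj, r'.unop.property⟩ : Subcat R))).hom h1.symm).trans hnat
  rw [← Category.assoc]
  exact hnat2.symm

/-- Yoneda: the map `(r⟦-1⟧ ⟶ c) → Hom(G(r⟦-1⟧), Gc)` is injective for `r ∈ R`. -/
lemma G_yoneda_inj {r : C} (hr : r ∈ R) (c : C) (b : r⟦(-1 : ℤ)⟧ ⟶ c)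
    (hb : (Gfun R).map b = 0) : b = 0 := by
  apply (shiftFunctor C (1 : ℤ)).map_injective
  rw [Functor.map_zero]
  have h0 := DFunLike.congr_fun (congrArg ModuleCat.Hom.hom (congrFun (congrArg NatTrans.app hb) (Opposite.op ⟨r, hr⟩)))
    ((shiftFunctorCompIsoId C (-1 : ℤ) (1 : ℤ) (by ring)).inv.app r)
  have h1 : (shiftFunctorCompIsoId C (-1 : ℤ) (1 : ℤ) (by ring)).inv.app r ≫ b⟦(1 : ℤ)⟧'
      = 0 := h0
  rwa [← cancel_epi ((shiftFunctorCompIsoId C (-1 : ℤ) (1 : ℤ) (by ring)).inv.app r),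
    Limits.comp_zero]

end

/-- Let `C` be a (pretriangulated) triangulated category, `R` a rigid
functorially finite subcategory, and `G(c) = C(−, Σc)|_R`.  For `z ∈ (Σ⁻¹R) * R` (i.e. `z`
sits in a distinguished triangle `Σ⁻¹r₀ → z → r₁` with `r₀, r₁ ∈ R`) and any `c ∈ C`, the
map `C(z, c) → Hom_{Mod R}(Gz, Gc)` induced by `G` is surjective. -/
theorem stmt_10 {C : Type*} [Category C] [Preadditive C] [Linear ℂ C]
    [Limits.HasZeroObject C] [HasShift C ℤ]
    [∀ n : ℤ, (CategoryTheory.shiftFunctor C n).Additive] [Pretriangulated C]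
    (R : Set C)
    (hrigid : ∀ r r' : C, r ∈ R → r' ∈ R → ∀ f : r ⟶ r'⟦(1 : ℤ)⟧, f = 0)
    (z : C) (r₀ r₁ : C) (h₀ : r₀ ∈ R) (h₁ : r₁ ∈ R)
    (g : r₀⟦(-1 : ℤ)⟧ ⟶ z) (h : z ⟶ r₁) (w : r₁ ⟶ (r₀⟦(-1 : ℤ)⟧)⟦(1 : ℤ)⟧)
    (hdist : Pretriangulated.Triangle.mk g h w ∈
      (Pretriangulated.distinguishedTriangles (C := C)))
    (c : C) :
    Function.Surjective (fun f : z ⟶ c => (Gfun R).map f) := by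

  intro η
  obtain ⟨a, ha⟩ := G_yoneda_surj R h₀ c ((Gfun R).map g ≫ η)
  have hmg : (Pretriangulated.Triangle.mk g h w).invRotate.mor₁ ≫ g = 0 :=
    Pretriangulated.comp_distTriang_mor_zero₁₂ _
      (Pretriangulated.inv_rot_of_distTriang _ hdist)
  have hG : (Gfun R).map ((Pretriangulated.Triangle.mk g h w).invRotate.mor₁ ≫ a) = 0 := by
    erw [Functor.map_comp, ha, ← Category.assoc, ← Functor.map_comp, hmg,
      Gfun_map_zero, Limits.zero_comp]
  have hma : (Pretriangulated.Triangle.mk g h w).invRotate.mor₁ ≫ a = 0 :=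
    G_yoneda_inj R h₁ c _ hG
  obtain ⟨f, hf⟩ := Pretriangulated.Triangle.yoneda_exact₂ _
    (Pretriangulated.inv_rot_of_distTriang _ hdist) a hma
  refine ⟨f, ?_⟩
  show (Gfun R).map f = η
  apply NatTrans.ext; funext r'
  ext (x : r'.unop.obj ⟶ z⟦(1 : ℤ)⟧)
  have hxh : x ≫ h⟦(1 : ℤ)⟧' = 0 :=
    hrigid r'.unop.obj r₁ r'.unop.property h₁ (x ≫ h⟦(1 : ℤ)⟧')
  obtain ⟨y, hy⟩ := Pretriangulated.Triangle.coyoneda_exact₃ _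
    (Pretriangulated.rot_of_distTriang _ (Pretriangulated.rot_of_distTriang _ hdist)) x
    (show x ≫ (-(h⟦(1 : ℤ)⟧')) = 0 by rw [Preadditive.comp_neg, hxh, neg_zero])
  have hy' : x = -(y ≫ g⟦(1 : ℤ)⟧') := by
    rw [hy]; show y ≫ (-(g⟦(1 : ℤ)⟧')) = _; exact Preadditive.comp_neg _ _
  have e1 : η.app r' (y ≫ g⟦(1 : ℤ)⟧') = y ≫ a⟦(1 : ℤ)⟧' := by
    have h2 := DFunLike.congr_fun (congrArg ModuleCat.Hom.hom (congrFun (congrArg NatTrans.app ha) r')) y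
    exact h2.symm
  show x ≫ f⟦(1 : ℤ)⟧' = η.app r' x
  erw [hy', map_neg (ConcreteCategory.hom (η.app r')), e1, hf]
  simp only [Preadditive.neg_comp, Category.assoc, Functor.map_comp]
  exact congrArg Neg.neg ((Category.assoc _ _ _).trans (congrArg (y ≫ ·) (Functor.map_comp _ _ _).symm))
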